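/- Let A be a real m×n matrix of exact rank k, and let l be an integer with l ≥ k. Let R be a random n×l matrix whose entries are independent standard Gaussian random variables. Then almost surely (with respect to the law of R), the column space of the product A·R equals the column space of A; in particular, rank(A·R) = rank(A) = k almost surely. -/

import Mathlib

open MeasureTheory ProbabilityTheory Matrix

lemma measurable_mvpolynomial_eval {ι : Type*} (p : MvPolynomial ι ℝ) :
    Measurable fun x : ι → ℝ => MvPolynomial.eval x p := by
  induction p using MvPolynomial.induction_on with
  | C a => simpa only [MvPolynomial.eval_C] using measurable_const
  | add p q hp hq => simp only [map_add]; exact hp.add hq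
  | mul_X p i hp => simp only [_root_.map_mul, MvPolynomial.eval_X]; exact hp.mul (measurable_pi_apply i)

lemma gaussian_poly_null (q : Polynomial ℝ) (hq : q ≠ 0) :
    (gaussianReal 0 1) {x | q.eval x = 0} = 0 := by
  have h1 : {x | q.eval x = 0} ⊆ (q.roots.toFinset : Set ℝ) := by
    intro x hx
    simpa [Polynomial.mem_roots hq] using hx
  have h2 : (volume : Measure ℝ) ((q.roots.toFinset : Set ℝ)) = 0 :=
    (q.roots.toFinset.finite_toSet.countable).measure_zero _
  exact measure_mono_null h1 (gaussianReal_absolutelyContinuous 0 one_ne_zero h2)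

lemma pi_gaussian_mv_fin : ∀ (d : ℕ) (p : MvPolynomial (Fin d) ℝ), p ≠ 0 →
    Measure.pi (fun _ : Fin d => gaussianReal 0 1) {x | MvPolynomial.eval x p = 0} = 0 := by
  intro d
  induction d with
  | zero =>
    intro p hp
    obtain ⟨c, rfl⟩ := MvPolynomial.C_surjective (Fin 0) p
    have hc : c ≠ 0 := fun h => hp (by simp [h])
    have : {x : Fin 0 → ℝ | MvPolynomial.eval x (MvPolynomial.C c) = 0} = ∅ := by
      ext x; simp [hc]
    rw [this]; simp
  | succ d ih =>
    intro p hp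
    set q : Polynomial (MvPolynomial (Fin d) ℝ) := MvPolynomial.finSuccEquiv ℝ d p with hqdef
    have hq : q ≠ 0 := by
      intro h
      exact hp ((map_eq_zero_iff _ (AlgEquiv.injective _)).1 h)
    have hc : q.leadingCoeff ≠ 0 := Polynomial.leadingCoeff_ne_zero.2 hq
    set μ1 := gaussianReal 0 1 with hμ1
    set ν := Measure.pi (fun _ : Fin d => μ1) with hν
    set S : Set (ℝ × (Fin d → ℝ)) := {z | MvPolynomial.eval (Fin.cons z.1 z.2) p = 0} with hSdef
    have hmeas_cons : Measurable fun z : ℝ × (Fin d → ℝ) => (Fin.cons z.1 z.2 : Fin (d+1) → ℝ) := by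
      apply measurable_pi_lambda
      intro i
      refine Fin.cases ?_ ?_ i
      · simpa using (measurable_fst : Measurable fun z : ℝ × (Fin d → ℝ) => z.1)
      · intro j; simp; exact (measurable_pi_apply j).comp
          (measurable_snd : Measurable fun z : ℝ × (Fin d → ℝ) => z.2)
    have hS : MeasurableSet S :=
      ((measurable_mvpolynomial_eval p).comp hmeas_cons) (MeasurableSet.singleton 0)
    have key : (μ1.prod ν) S = 0 := by
      rw [Measure.prod_apply_symm hS]
      have h0 : ∀ᵐ y ∂ν, MvPolynomial.eval y q.leadingCoeff ≠ 0 := by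
        rw [ae_iff]
        simpa only [not_not] using ih q.leadingCoeff hc
      rw [lintegral_congr_ae (g := fun _ => 0) ?_, lintegral_zero]
      filter_upwards [h0] with y hy
      have hqy : q.map (MvPolynomial.eval y) ≠ 0 := by
        intro h
        apply hy
        have h2 := congrArg (fun r => Polynomial.coeff r q.natDegree) h
        simp only [Polynomial.coeff_map, Polynomial.coeff_zero] at h2
        rw [Polynomial.leadingCoeff]
        exact h2
      have hpre : (fun x => (x, y)) ⁻¹' S = {x | (q.map (MvPolynomial.eval y)).eval x = 0} := by
        ext x
        simp only [Set.mem_preimage, hSdef, Set.mem_setOf_eq]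
        rw [MvPolynomial.eval_eq_eval_mv_eval']
      rw [hpre]
      exact gaussian_poly_null _ hqy
    have hset : {x : Fin (d+1) → ℝ | MvPolynomial.eval x p = 0} =
        (MeasurableEquiv.piFinSuccAbove (fun _ : Fin (d+1) => ℝ) 0) ⁻¹' S := by
      ext x
      have hx : (Fin.cons (x 0) (fun j => x ((0 : Fin (d+1)).succAbove j)) : Fin (d+1) → ℝ) = x := by
        funext i
        refine Fin.cases ?_ ?_ i
        · simp
        · intro j; simp [Fin.zero_succAbove]
      show MvPolynomial.eval x p = 0 ↔ _
      have he : (MeasurableEquiv.piFinSuccAbove (fun _ : Fin (d+1) => ℝ) 0) x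
          = (x 0, fun j => x ((0 : Fin (d+1)).succAbove j)) := rfl
      rw [Set.mem_preimage, he, hSdef, Set.mem_setOf_eq]
      rw [show ((x 0, fun j => x ((0 : Fin (d+1)).succAbove j)) : ℝ × (Fin d → ℝ)).1 = x 0 from rfl,
        show ((x 0, fun j => x ((0 : Fin (d+1)).succAbove j)) : ℝ × (Fin d → ℝ)).2 = fun j => x ((0 : Fin (d+1)).succAbove j) from rfl, hx]
    rw [hset]
    have hmp := measurePreserving_piFinSuccAbove (fun _ : Fin (d+1) => gaussianReal 0 1) 0
    rw [hmp.measure_preimage hS.nullMeasurableSet]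
    exact key

lemma pi_gaussian_mv {ι : Type*} [Fintype ι] [MeasurableSpace (ι → ℝ)]
    (hmi : ‹MeasurableSpace (ι → ℝ)› = MeasurableSpace.pi)
    (p : MvPolynomial ι ℝ) (hp : p ≠ 0) :
    Measure.pi (fun _ : ι => gaussianReal 0 1) {x | MvPolynomial.eval x p = 0} = 0 := by
  subst hmi
  obtain ⟨e⟩ : Nonempty (Fin (Fintype.card ι) ≃ ι) := ⟨(Fintype.equivFin ι).symm⟩
  have hS : MeasurableSet {x : ι → ℝ | MvPolynomial.eval x p = 0} :=
    (measurable_mvpolynomial_eval p) (MeasurableSet.singleton 0)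
  have hmp := measurePreserving_piCongrLeft (fun _ : ι => gaussianReal 0 1) e
  rw [← hmp.measure_preimage hS.nullMeasurableSet]
  have hset : (MeasurableEquiv.piCongrLeft (fun _ : ι => ℝ) e) ⁻¹'
      {x : ι → ℝ | MvPolynomial.eval x p = 0}
      = {y : Fin (Fintype.card ι) → ℝ |
          MvPolynomial.eval y (MvPolynomial.rename e.symm p) = 0} := by
    ext y
    simp only [Set.mem_preimage, Set.mem_setOf_eq, MvPolynomial.eval_rename]
    have hfun : (⇑(MeasurableEquiv.piCongrLeft (fun _ : ι => ℝ) e) y)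
        = fun i => y (e.symm i) := by
      funext i
      conv_lhs => rw [show i = e (e.symm i) by simp]
      exact MeasurableEquiv.piCongrLeft_apply_apply (β := fun _ : ι => ℝ) e y (e.symm i)
    rw [hfun]
    rfl
  rw [hset]
  apply pi_gaussian_mv_fin
  intro h
  apply hp
  have := MvPolynomial.rename_injective (R := ℝ) _ e.symm.injective
  exact this (by simpa using h)

lemma isUnit_of_rank_eq {k : ℕ} (M : Matrix (Fin k) (Fin k) ℝ) (h : M.rank = k) :
    IsUnit M := by
  rw [← Matrix.mulVec_surjective_iff_isUnit]
  unfold Matrix.rank at h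
  have hr : LinearMap.range M.mulVecLin = ⊤ := by
    apply Submodule.eq_top_of_finrank_eq
    rw [h]
    simp [Module.finrank_pi]
  intro v
  obtain ⟨w, hw⟩ := hr ▸ (Submodule.mem_top : v ∈ ⊤)
  exact ⟨w, hw⟩

lemma exists_LS {m n k : ℕ} (A : Matrix (Fin m) (Fin n) ℝ) (hrank : A.rank = k) :
    ∃ (L : Matrix (Fin k) (Fin m) ℝ) (S : Matrix (Fin n) (Fin k) ℝ),
      IsUnit (L * A * S).det := by
  classical
  have hfr : Module.finrank ℝ ↥(LinearMap.range A.mulVecLin) = k := by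
    unfold Matrix.rank at hrank; exact hrank
  let b : Module.Basis (Fin k) ℝ ↥(LinearMap.range A.mulVecLin) :=
    (Module.finBasis ℝ _).reindex (finCongr hfr)
  have hmem : ∀ i : Fin k, ∃ v : Fin n → ℝ, A.mulVecLin v = (b i : Fin m → ℝ) :=
    fun i => (b i).2
  choose v hv using hmem
  set S : Matrix (Fin n) (Fin k) ℝ := Matrix.of fun r i => v i r with hSdef
  have hAS : ∀ i, (A * S).mulVec (Pi.single i 1) = (b i : Fin m → ℝ) := by
    intro i
    rw [← Matrix.mulVec_mulVec]
    have : S.mulVec (Pi.single i 1) = v i := by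
      rw [Matrix.mulVec_single]
      funext r
      simp [hSdef]
    rw [this]
    exact hv i
  have hli : LinearIndependent ℝ (fun i => (b i : Fin m → ℝ)) :=
    b.linearIndependent.map' (Submodule.subtype _) (Submodule.ker_subtype _)
  have hspan_le : Submodule.span ℝ (Set.range fun i => (b i : Fin m → ℝ))
      ≤ LinearMap.range (A * S).mulVecLin := by
    rw [Submodule.span_le]
    rintro _ ⟨i, rfl⟩
    exact ⟨Pi.single i 1, hAS i⟩
  have h1 : k ≤ (A * S).rank := by
    have h2 := Submodule.finrank_mono hspan_le
    rwa [finrank_span_eq_card hli, Fintype.card_fin] at h2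
  have h2 : (A * S).rank ≤ k := by
    simpa using Matrix.rank_le_card_width (A * S)
  have hAS_rank : (A * S).rank = k := le_antisymm h2 h1
  refine ⟨(A * S)ᵀ, S, ?_⟩
  have hassoc : (A * S)ᵀ * A * S = (A * S)ᵀ * (A * S) := by rw [Matrix.mul_assoc]
  rw [hassoc, ← Matrix.isUnit_iff_isUnit_det]
  apply isUnit_of_rank_eq
  rw [Matrix.rank_transpose_mul_self, hAS_rank]

theorem stmt_2 (m n k l : ℕ) (hkl : k ≤ l)
    (A : Matrix (Fin m) (Fin n) ℝ) (hrank : A.rank = k)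
    (μ : Measure ((Fin n × Fin l) → ℝ))
    (hμ : μ = Measure.pi fun _ => gaussianReal 0 1) :
    ∀ᵐ R ∂μ,
      LinearMap.range (Matrix.mulVecLin (A * Matrix.of fun i j => R (i, j))) =
          LinearMap.range (Matrix.mulVecLin A) ∧
        (A * Matrix.of fun i j => R (i, j)).rank = A.rank ∧ A.rank = k := by
  classical
  subst hμ
  obtain ⟨L, S, hLS⟩ := exists_LS A hrank
  set E : Matrix (Fin k) (Fin l) ℝ := Matrix.of fun i j => if Fin.castLE hkl i = j then 1 else 0
    with hEdef
  have hE : E * Eᵀ = 1 := by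
    ext i i'
    simp only [Matrix.mul_apply, hEdef, Matrix.transpose_apply, Matrix.of_apply, ite_mul, one_mul,
      zero_mul, Finset.sum_ite_eq, Finset.mem_univ, if_true, Matrix.one_apply]
    by_cases h : i = i'
    · simp [h]
    · simp only [Fin.castLE_inj]
      rw [if_neg (fun e : i' = i => h e.symm), if_neg h]

  set Xm : Matrix (Fin n) (Fin l) (MvPolynomial (Fin n × Fin l) ℝ) :=
    Matrix.of fun i j => MvPolynomial.X (i, j) with hXm
  set P : MvPolynomial (Fin n × Fin l) ℝ :=
    ((Matrix.map (L * A) (MvPolynomial.C (σ := Fin n × Fin l))) * Xm * (Matrix.map Eᵀ (MvPolynomial.C (σ := Fin n × Fin l)))).det with hPdef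
  have hPeval : ∀ x : (Fin n × Fin l) → ℝ,
      MvPolynomial.eval x P = (L * A * (Matrix.of fun i j => x (i, j)) * Eᵀ).det := by
    intro x
    rw [hPdef, RingHom.map_det]
    congr 1
    simp only [RingHom.mapMatrix_apply, Matrix.map_mul, Matrix.map_map]
    have h1 : ∀ {a b : ℕ} (M : Matrix (Fin a) (Fin b) ℝ),
        M.map (⇑(MvPolynomial.eval x) ∘ ⇑(MvPolynomial.C (σ := Fin n × Fin l))) = M := by
      intro a b M; ext i j; simp
    have h2 : Xm.map (MvPolynomial.eval x) = Matrix.of fun i j => x (i, j) := by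
      ext i j; simp [hXm]
    rw [h1, h1, h1, h2]
  have hP0 : P ≠ 0 := by
    intro h
    have hx0 := hPeval (fun q => (S * E) q.1 q.2)
    rw [h] at hx0
    simp only [map_zero] at hx0
    have hof : (Matrix.of fun i j => (S * E) i j) = S * E := rfl
    rw [hof] at hx0
    have h2 : L * A * (S * E) * Eᵀ = L * A * S := by
      rw [show L * A * (S * E) * Eᵀ = L * A * S * (E * Eᵀ) by
        simp only [Matrix.mul_assoc], hE, Matrix.mul_one]
    rw [h2] at hx0
    exact hLS.ne_zero hx0.symm
  have hae : ∀ᵐ x ∂(Measure.pi fun _ : Fin n × Fin l => gaussianReal 0 1),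
      MvPolynomial.eval x P ≠ 0 := by
    rw [ae_iff]
    simpa only [not_not] using pi_gaussian_mv rfl P hP0
  filter_upwards [hae] with R hR
  set B : Matrix (Fin n) (Fin l) ℝ := Matrix.of fun i j => R (i, j) with hBdef
  rw [hPeval R] at hR
  have hdet : IsUnit (L * (A * B) * Eᵀ) := by
    rw [Matrix.isUnit_iff_isUnit_det]
    rw [show L * (A * B) * Eᵀ = L * A * B * Eᵀ by simp only [Matrix.mul_assoc]]
    exact isUnit_iff_ne_zero.2 hR
  have hk_le : k ≤ (A * B).rank := by
    have h1 : (L * (A * B) * Eᵀ).rank = k := by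
      rw [Matrix.rank_of_isUnit _ hdet, Fintype.card_fin]
    calc k = (L * (A * B) * Eᵀ).rank := h1.symm
      _ ≤ (L * (A * B)).rank := Matrix.rank_mul_le_left _ _
      _ ≤ (A * B).rank := Matrix.rank_mul_le_right _ _
  have hle2 : (A * B).rank ≤ k := hrank ▸ Matrix.rank_mul_le_left A B
  have hrAB : (A * B).rank = k := le_antisymm hle2 hk_le
  have hsub : LinearMap.range (A * B).mulVecLin ≤ LinearMap.range A.mulVecLin := by
    rw [Matrix.mulVecLin_mul]
    exact LinearMap.range_comp_le_range _ _
  have hfin : Module.finrank ℝ ↥(LinearMap.range (A * B).mulVecLin)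
      = Module.finrank ℝ ↥(LinearMap.range A.mulVecLin) := by
    have e1 : (A * B).rank = A.rank := hrAB.trans hrank.symm
    unfold Matrix.rank at e1
    exact e1
  exact ⟨Submodule.eq_of_le_of_finrank_eq hsub hfin, hrAB.trans hrank.symm, hrank⟩
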